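/- For a bipartite pure state, the entanglement of purification equals its entanglement entropy: if ρ = |φ⟩⟨φ| for a unit vector |φ⟩ ∈ H_A ⊗ H_B, then E_p(ρ) = E(φ) = S(Tr_A |φ⟩⟨φ|), and the optimal purification is the pure state itself (trivial ancillas). -/

import Mathlib

noncomputable section
open scoped BigOperators Kronecker Matrix ComplexOrder
open Matrix

namespace QIT

def IsDensity {n : Type*} [Fintype n] [DecidableEq n] (ρ : Matrix n n ℂ) : Prop :=
  ρ.PosSemidef ∧ ρ.trace = 1

noncomputable def vN {n : Type*} [Fintype n] [DecidableEq n] (ρ : Matrix n n ℂ) : ℝ :=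
  if h : ρ.IsHermitian then ∑ i, -(h.eigenvalues i * Real.logb 2 (h.eigenvalues i)) else 0

def proj {n : Type*} (ψ : n → ℂ) : Matrix n n ℂ :=
  Matrix.of fun x y => ψ x * (starRingEnd ℂ) (ψ y)

def ptraceL {a b : Type*} [Fintype a] (ρ : Matrix (a × b) (a × b) ℂ) : Matrix b b ℂ :=
  Matrix.of fun i j => ∑ k, ρ (k, i) (k, j)

def ptraceR {a b : Type*} [Fintype b] (ρ : Matrix (a × b) (a × b) ℂ) : Matrix a a ℂ :=
  Matrix.of fun i j => ∑ k, ρ (i, k) (j, k)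

noncomputable def ent {X Y : Type*} [Fintype X] [Fintype Y] [DecidableEq Y]
    (ψ : X × Y → ℂ) : ℝ :=
  vN (ptraceL (proj ψ))

def IsPurification {A B : Type*} [Fintype A] [Fintype B] {dA' dB' : ℕ}
    (ρ : Matrix (A × B) (A × B) ℂ)
    (ψ : (A × Fin dA') × (B × Fin dB') → ℂ) : Prop :=
  (∑ x, ‖ψ x‖ ^ 2 = 1) ∧
  ∀ a b a' b', ρ (a, b) (a', b') =
    ∑ a2 : Fin dA', ∑ b2 : Fin dB',
      ψ ((a, a2), (b, b2)) * (starRingEnd ℂ) (ψ ((a', a2), (b', b2)))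

noncomputable def Ep {A B : Type*} [Fintype A] [Fintype B] [DecidableEq A] [DecidableEq B]
    (ρ : Matrix (A × B) (A × B) ℂ) : ℝ :=
  sInf { e : ℝ | ∃ (dA' dB' : ℕ) (ψ : (A × Fin dA') × (B × Fin dB') → ℂ),
    IsPurification ρ ψ ∧ e = ent ψ }

noncomputable def Iq {A B : Type*} [Fintype A] [Fintype B] [DecidableEq A] [DecidableEq B]
    (ρ : Matrix (A × B) (A × B) ℂ) : ℝ :=
  vN (ptraceR ρ) + vN (ptraceL ρ) - vN ρ

open Classical in
noncomputable def msqrt {n : Type*} [Fintype n] [DecidableEq n] (M : Matrix n n ℂ) : Matrix n n ℂ :=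
  if h : M.PosSemidef then h.1.eigenvectorUnitary.1 * diagonal ((↑) ∘ (√·) ∘ h.1.eigenvalues) *
    (star h.1.eigenvectorUnitary : Matrix n n ℂ) else 0

noncomputable def fid {n : Type*} [Fintype n] [DecidableEq n] (ρ σ : Matrix n n ℂ) : ℝ :=
  ((msqrt (msqrt ρ * σ * msqrt ρ)).trace).re

noncomputable def bures {n : Type*} [Fintype n] [DecidableEq n] (ρ σ : Matrix n n ℂ) : ℝ :=
  2 * Real.sqrt (1 - fid ρ σ)

noncomputable def traceNorm {n : Type*} [Fintype n] [DecidableEq n] (X : Matrix n n ℂ) : ℝ :=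
  ((msqrt (Xᴴ * X)).trace).re

def IsPOVM {n : Type*} [Fintype n] [DecidableEq n] {k : ℕ} (M : Fin k → Matrix n n ℂ) : Prop :=
  (∀ i, (M i).PosSemidef) ∧ ∑ i, M i = 1

noncomputable def shannon {k : Type*} [Fintype k] (p : k → ℝ) : ℝ :=
  ∑ i, -(p i * Real.logb 2 (p i))

noncomputable def miJoint {k l : Type*} [Fintype k] [Fintype l] (p : k × l → ℝ) : ℝ :=
  shannon (fun i => ∑ j, p (i, j)) + shannon (fun j => ∑ i, p (i, j)) - shannon p

noncomputable def Ic {A B : Type*} [Fintype A] [Fintype B] [DecidableEq A] [DecidableEq B]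
    (ρ : Matrix (A × B) (A × B) ℂ) : ℝ :=
  sSup { e : ℝ | ∃ (k l : ℕ) (MA : Fin k → Matrix A A ℂ) (MB : Fin l → Matrix B B ℂ),
    IsPOVM MA ∧ IsPOVM MB ∧
    e = miJoint (fun ij : Fin k × Fin l => (((MA ij.1 ⊗ₖ MB ij.2) * ρ).trace).re) }

noncomputable def probOf {A B : Type*} [Fintype A] [Fintype B] [DecidableEq A] [DecidableEq B]
    (M : Matrix A A ℂ) (ρ : Matrix (A × B) (A × B) ℂ) : ℝ :=
  (((M ⊗ₖ (1 : Matrix B B ℂ)) * ρ).trace).re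

noncomputable def postB {A B : Type*} [Fintype A] [Fintype B] [DecidableEq A] [DecidableEq B]
    (M : Matrix A A ℂ) (ρ : Matrix (A × B) (A × B) ℂ) : Matrix B B ℂ :=
  ((probOf M ρ : ℂ))⁻¹ • ptraceL ((M ⊗ₖ (1 : Matrix B B ℂ)) * ρ)

noncomputable def CA {A B : Type*} [Fintype A] [Fintype B] [DecidableEq A] [DecidableEq B]
    (ρ : Matrix (A × B) (A × B) ℂ) : ℝ :=
  sSup { c : ℝ | ∃ (k : ℕ) (M : Fin k → Matrix A A ℂ), IsPOVM M ∧
    c = vN (∑ i, (probOf (M i) ρ : ℂ) • postB (M i) ρ)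
        - ∑ i, probOf (M i) ρ * vN (postB (M i) ρ) }

noncomputable def pauli : Fin 4 → Matrix (Fin 2) (Fin 2) ℂ :=
  ![1, !![0, 1; 1, 0], !![0, -Complex.I; Complex.I, 0], !![1, 0; 0, -1]]

noncomputable def bell0 : Fin 2 × Fin 2 → ℂ :=
  fun x => if x.1 = x.2 then ((Real.sqrt 2)⁻¹ : ℝ) else 0

noncomputable def bell (i : Fin 4) : Fin 2 × Fin 2 → ℂ :=
  fun x => ∑ j, pauli i x.2 j * bell0 (x.1, j)

noncomputable def binEnt (x : ℝ) : ℝ :=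
  -(x * Real.logb 2 x) - (1 - x) * Real.logb 2 (1 - x)

noncomputable def pauliChannel (p : Fin 4 → ℝ) (X : Matrix (Fin 2) (Fin 2) ℂ) :
    Matrix (Fin 2) (Fin 2) ℂ :=
  ∑ i, (p i : ℂ) • (pauli i * X * pauli i)

noncomputable def holevoCap (Λ : Matrix (Fin 2) (Fin 2) ℂ → Matrix (Fin 2) (Fin 2) ℂ) : ℝ :=
  sSup { c : ℝ | ∃ (k : ℕ) (q : Fin k → ℝ) (ρs : Fin k → Matrix (Fin 2) (Fin 2) ℂ),
    (∀ i, 0 ≤ q i) ∧ (∑ i, q i = 1) ∧ (∀ i, IsDensity (ρs i)) ∧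
    c = vN (∑ i, (q i : ℂ) • Λ (ρs i)) - ∑ i, q i * vN (Λ (ρs i)) }

def tensPow {A B : Type*} [Fintype A] [Fintype B]
    (ρ : Matrix (A × B) (A × B) ℂ) (n : ℕ) :
    Matrix ((Fin n → A) × (Fin n → B)) ((Fin n → A) × (Fin n → B)) ℂ :=
  Matrix.of fun x y => ∏ t, ρ (x.1 t, x.2 t) (y.1 t, y.2 t)

open Polynomial

/-- entropy summand -/
def gfun (x : ℝ) : ℝ := -(x * Real.logb 2 x)

lemma gfun_nonneg {x : ℝ} (h0 : 0 ≤ x) (h1 : x ≤ 1) : 0 ≤ gfun x := by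
  have := Real.logb_nonpos (b := 2) one_lt_two h0 h1
  have : x * Real.logb 2 x ≤ 0 := mul_nonpos_of_nonneg_of_nonpos h0 this
  simpa [gfun] using this

lemma gfun_mul {x y : ℝ} (hx : 0 ≤ x) (hy : 0 ≤ y) :
    gfun (x * y) = y * gfun x + x * gfun y := by
  rcases eq_or_lt_of_le hx with h | hx'
  · simp [gfun, ← h]
  rcases eq_or_lt_of_le hy with h | hy'
  · simp [gfun, ← h]
  rw [gfun, gfun, gfun, Real.logb, Real.log_mul hx'.ne' hy'.ne']
  unfold Real.logb
  ring

lemma vN_eq_sum {n : Type*} [Fintype n] [DecidableEq n] {ρ : Matrix n n ℂ}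
    (h : ρ.IsHermitian) : vN ρ = ∑ i, gfun (h.eigenvalues i) := by
  rw [vN, dif_pos h]; rfl

lemma kron_conjT {m n p q : Type*} (A : Matrix m n ℂ) (B : Matrix p q ℂ) :
    (A ⊗ₖ B)ᴴ = Aᴴ ⊗ₖ Bᴴ := by
  ext i j
  simp [Matrix.conjTranspose_apply, Matrix.kroneckerMap_apply]

lemma trace_eq_sum_eigen {n : Type*} [Fintype n] [DecidableEq n] {M : Matrix n n ℂ}
    (hM : M.IsHermitian) : M.trace = ((∑ i, hM.eigenvalues i : ℝ) : ℂ) := by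
  have hV' : (hM.eigenvectorUnitary : Matrix n n ℂ)ᴴ * (hM.eigenvectorUnitary : Matrix n n ℂ) = 1 := by
    simpa [Matrix.star_eq_conjTranspose] using
      (Matrix.mem_unitaryGroup_iff'.mp hM.eigenvectorUnitary.2)
  conv_lhs => rw [hM.spectral_theorem, Unitary.conjStarAlgAut_apply]
  rw [show (star (hM.eigenvectorUnitary : Matrix n n ℂ)) = (hM.eigenvectorUnitary : Matrix n n ℂ)ᴴ from rfl,
    Matrix.trace_mul_cycle, hV', one_mul, Matrix.trace_diagonal]
  push_cast
  rfl

lemma density_ptraceL {X Y : Type*} [Fintype X] [Fintype Y] [DecidableEq Y]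
    (χ : X × Y → ℂ) (hχ : ∑ x, ‖χ x‖ ^ 2 = 1) :
    (ptraceL (proj χ)).PosSemidef ∧ (ptraceL (proj χ)).trace = 1 := by
  constructor
  · have : ptraceL (proj χ) = (Matrix.of fun (k : X) (j : Y) => (starRingEnd ℂ) (χ (k, j)))ᴴ *
        (Matrix.of fun (k : X) (j : Y) => (starRingEnd ℂ) (χ (k, j))) := by
      ext i j
      simp [ptraceL, proj, Matrix.mul_apply, Matrix.conjTranspose_apply, mul_comm]
    rw [this]
    exact Matrix.posSemidef_conjTranspose_mul_self _
  · have e1 : ∀ (x : X × Y), χ x * (starRingEnd ℂ) (χ x) = ((‖χ x‖ : ℝ) ^ 2 : ℂ) := by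
      intro x
      rw [Complex.mul_conj, Complex.normSq_eq_norm_sq]
      norm_cast
    have h2 : (ptraceL (proj χ)).trace = ∑ j : Y, ∑ k : X, ((‖χ (k, j)‖ : ℝ) ^ 2 : ℂ) := by
      rw [Matrix.trace]
      refine Finset.sum_congr rfl fun j _ => ?_
      show ∑ k, proj χ (k, j) (k, j) = _
      exact Finset.sum_congr rfl fun k _ => e1 (k, j)
    rw [h2, Finset.sum_comm]
    rw [show ∑ k : X, ∑ j : Y, ((‖χ (k, j)‖ : ℝ) ^ 2 : ℂ) = ∑ x : X × Y, ((‖χ x‖ : ℝ) ^ 2 : ℂ)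
      from (Fintype.sum_prod_type (f := fun x : X × Y => ((‖χ x‖ : ℝ) ^ 2 : ℂ))).symm]
    have h3 : ∑ x : X × Y, ((‖χ x‖ : ℝ) ^ 2 : ℂ) = ((∑ x, ‖χ x‖ ^ 2 : ℝ) : ℂ) := by
      push_cast; rfl
    rw [h3, hχ, Complex.ofReal_one]

lemma sum_eigen_one {n : Type*} [Fintype n] [DecidableEq n] {M : Matrix n n ℂ}
    (hM : M.IsHermitian) (h1 : M.trace = 1) : ∑ i, hM.eigenvalues i = 1 := by
  have := (trace_eq_sum_eigen hM).symm.trans h1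
  exact_mod_cast this

lemma vN_nonneg {n : Type*} [Fintype n] [DecidableEq n] {M : Matrix n n ℂ}
    (hM : M.PosSemidef) (h1 : M.trace = 1) : 0 ≤ vN M := by
  rw [vN_eq_sum hM.1]
  apply Finset.sum_nonneg
  intro i _
  apply gfun_nonneg (hM.eigenvalues_nonneg i)
  calc hM.1.eigenvalues i ≤ ∑ j, hM.1.eigenvalues j :=
        Finset.single_le_sum (fun j _ => hM.eigenvalues_nonneg j) (Finset.mem_univ i)
    _ = 1 := sum_eigen_one hM.1 h1


lemma charpoly_diag {n : Type*} [Fintype n] [DecidableEq n] (d : n → ℂ) :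
    (Matrix.diagonal d).charpoly = ∏ i, (X - C (d i)) := by
  rw [Matrix.charpoly]
  have : charmatrix (Matrix.diagonal d) = Matrix.diagonal (fun i => X - C (d i)) := by
    ext i j
    by_cases h : i = j
    · subst h; simp [charmatrix_apply_eq]
    · simp [charmatrix_apply_ne _ _ _ h, Matrix.diagonal_apply_ne _ h]
  rw [this, Matrix.det_diagonal]

lemma charpoly_conj {n : Type*} [Fintype n] [DecidableEq n] (U D : Matrix n n ℂ)
    (hU : U * Uᴴ = 1) : (U * D * Uᴴ).charpoly = D.charpoly := by
  have hmap : (U.map C) * (Uᴴ.map C) = 1 := by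
    rw [← Matrix.map_mul, hU]; simp
  have hmap' : (Uᴴ.map C) * (U.map C) = 1 := by
    rw [← Matrix.map_mul, mul_eq_one_comm.mp hU]; simp
  have h2 : charmatrix (U * D * Uᴴ) = U.map C * charmatrix D * Uᴴ.map C := by
    rw [charmatrix, charmatrix, mul_sub, sub_mul]
    congr 1
    · rw [← (Matrix.scalar_commute (X : ℂ[X]) (fun r => Commute.all _ _) (U.map C)).eq, mul_assoc,
        hmap, mul_one]
    · show C.mapMatrix (U * D * Uᴴ) = U.map C * C.mapMatrix D * Uᴴ.map C
      simp [Matrix.map_mul]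
  rw [Matrix.charpoly, Matrix.charpoly, h2, Matrix.det_mul, Matrix.det_mul, mul_comm,
    ← mul_assoc, ← Matrix.det_mul, hmap']
  simp

lemma spec_sum {n : Type*} [Fintype n] [DecidableEq n] {M : Matrix n n ℂ} (hM : M.IsHermitian)
    (U : Matrix n n ℂ) (hU : U * Uᴴ = 1) (f : n → ℝ)
    (hMU : M = U * Matrix.diagonal (fun i => (f i : ℂ)) * Uᴴ) (g : ℝ → ℝ) :
    ∑ i, g (hM.eigenvalues i) = ∑ i, g (f i) := by
  have hV : (hM.eigenvectorUnitary : Matrix n n ℂ) * (hM.eigenvectorUnitary : Matrix n n ℂ)ᴴ = 1 := by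
    simpa [Matrix.star_eq_conjTranspose] using (Matrix.mem_unitaryGroup_iff.mp hM.eigenvectorUnitary.2)
  have h1 : M.charpoly = ∏ i, (X - C ((f i : ℂ))) := by
    rw [hMU, charpoly_conj _ _ hU, charpoly_diag]
  have h2 : M.charpoly = ∏ i, (X - C ((hM.eigenvalues i : ℂ))) := by
    conv_lhs => rw [hM.spectral_theorem, Unitary.conjStarAlgAut_apply]
    rw [show (star (hM.eigenvectorUnitary : Matrix n n ℂ)) = (hM.eigenvectorUnitary : Matrix n n ℂ)ᴴ from rfl,
      charpoly_conj _ _ hV, charpoly_diag]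
    rfl
  have key : ∀ (h : n → ℝ), (Finset.univ.val.map fun i => ((h i : ℂ))) =
      ((Finset.univ.val.map fun i => X - C ((h i : ℂ)))).prod.roots := by
    intro h
    conv_lhs => rw [← Polynomial.roots_multiset_prod_X_sub_C
      (Finset.univ.val.map fun i => ((h i : ℂ)))]
    rw [Multiset.map_map]
    rfl
  have hms : (Finset.univ.val.map fun i => ((f i : ℂ))) =
      (Finset.univ.val.map fun i => ((hM.eigenvalues i : ℂ))) := by
    have := h1.symm.trans h2
    rw [Finset.prod_eq_multiset_prod, Finset.prod_eq_multiset_prod] at this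
    rw [key f, key hM.eigenvalues, this]
  have hreal : (Finset.univ.val.map f) = (Finset.univ.val.map hM.eigenvalues) := by
    apply Multiset.map_injective (Complex.ofReal_injective)
    have h2' := hms
    rwa [show (Finset.univ.val.map fun i => ((f i : ℂ))) = (Finset.univ.val.map f).map Complex.ofReal from (Multiset.map_map Complex.ofReal f Finset.univ.val).symm,
      show (Finset.univ.val.map fun i => ((hM.eigenvalues i : ℂ))) = (Finset.univ.val.map hM.eigenvalues).map Complex.ofReal from (Multiset.map_map Complex.ofReal hM.eigenvalues Finset.univ.val).symm] at h2'

  rw [Finset.sum_eq_multiset_sum, Finset.sum_eq_multiset_sum,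
    show (Finset.univ.val.map fun i => g (hM.eigenvalues i)) = (Finset.univ.val.map hM.eigenvalues).map g from (Multiset.map_map g hM.eigenvalues Finset.univ.val).symm,
    show (Finset.univ.val.map fun i => g (f i)) = (Finset.univ.val.map f).map g from (Multiset.map_map g f Finset.univ.val).symm,
    hreal]

lemma vN_kron {m n : Type*} [Fintype m] [DecidableEq m] [Fintype n] [DecidableEq n]
    {σ : Matrix m m ℂ} {τ : Matrix n n ℂ} (hσ : σ.PosSemidef) (hτ : τ.PosSemidef)
    (hσ1 : σ.trace = 1) (hτ1 : τ.trace = 1) :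
    vN (σ ⊗ₖ τ) = vN σ + vN τ := by
  set U := (hσ.1.eigenvectorUnitary : Matrix m m ℂ) with hUdef
  set V := (hτ.1.eigenvectorUnitary : Matrix n n ℂ) with hVdef
  have hU : U * Uᴴ = 1 := by
    simpa [Matrix.star_eq_conjTranspose] using
      Matrix.mem_unitaryGroup_iff.mp hσ.1.eigenvectorUnitary.2
  have hV : V * Vᴴ = 1 := by
    simpa [Matrix.star_eq_conjTranspose] using
      Matrix.mem_unitaryGroup_iff.mp hτ.1.eigenvectorUnitary.2
  have hkerm : (σ ⊗ₖ τ).IsHermitian := by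
    show (σ ⊗ₖ τ)ᴴ = σ ⊗ₖ τ
    rw [kron_conjT, hσ.1, hτ.1]
  have hdecomp : σ ⊗ₖ τ = (U ⊗ₖ V) *
      Matrix.diagonal (fun p : m × n =>
        ((hσ.1.eigenvalues p.1 * hτ.1.eigenvalues p.2 : ℝ) : ℂ)) * (U ⊗ₖ V)ᴴ := by
    conv_lhs => rw [hσ.1.spectral_theorem, hτ.1.spectral_theorem, Unitary.conjStarAlgAut_apply,
      Unitary.conjStarAlgAut_apply]
    rw [kron_conjT,
      show (star (hσ.1.eigenvectorUnitary : Matrix m m ℂ)) = Uᴴ from rfl,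
      show (star (hτ.1.eigenvectorUnitary : Matrix n n ℂ)) = Vᴴ from rfl,
      Matrix.mul_kronecker_mul, Matrix.mul_kronecker_mul,
      Matrix.diagonal_kronecker_diagonal,
      show (Matrix.diagonal fun p : m × n => (RCLike.ofReal ∘ hσ.1.eigenvalues) p.1 *
          (RCLike.ofReal ∘ hτ.1.eigenvalues) p.2 : Matrix (m × n) (m × n) ℂ) =
          Matrix.diagonal (fun p : m × n =>
            ((hσ.1.eigenvalues p.1 * hτ.1.eigenvalues p.2 : ℝ) : ℂ)) from by
        funext p; push_cast; rfl]
  have hUV : (U ⊗ₖ V) * (U ⊗ₖ V)ᴴ = 1 := by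
    rw [kron_conjT, ← Matrix.mul_kronecker_mul, hU, hV, Matrix.one_kronecker_one]
  rw [vN_eq_sum hkerm, spec_sum hkerm _ hUV _ hdecomp gfun]
  have hl1 := sum_eigen_one hσ.1 hσ1
  have hm1 := sum_eigen_one hτ.1 hτ1
  rw [Fintype.sum_prod_type]
  calc ∑ i, ∑ j, gfun (hσ.1.eigenvalues i * hτ.1.eigenvalues j)
      = ∑ i, ((∑ j, hτ.1.eigenvalues j) * gfun (hσ.1.eigenvalues i) +
          hσ.1.eigenvalues i * ∑ j, gfun (hτ.1.eigenvalues j)) := by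
        refine Finset.sum_congr rfl fun i _ => ?_
        rw [Finset.sum_congr rfl (fun j _ =>
          gfun_mul (hσ.eigenvalues_nonneg i) (hτ.eigenvalues_nonneg j)),
          Finset.sum_add_distrib, ← Finset.sum_mul, ← Finset.mul_sum]
    _ = vN σ + vN τ := by
        rw [hm1]
        simp only [one_mul]
        rw [Finset.sum_add_distrib, ← Finset.sum_mul, hl1, one_mul,
          vN_eq_sum hσ.1, vN_eq_sum hτ.1]

lemma vN_submatrix {m n : Type*} [Fintype m] [DecidableEq m] [Fintype n] [DecidableEq n]
    (e : m ≃ n) (M : Matrix n n ℂ) (hM : M.IsHermitian) :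
    vN (M.submatrix e e) = vN M := by
  have hM' : (M.submatrix e e).IsHermitian := hM.submatrix e
  set V := (hM.eigenvectorUnitary : Matrix n n ℂ) with hVdef
  have hV : V * Vᴴ = 1 := by
    simpa [Matrix.star_eq_conjTranspose] using
      Matrix.mem_unitaryGroup_iff.mp hM.eigenvectorUnitary.2
  have hV' : (V.submatrix e e) * (V.submatrix e e)ᴴ = 1 := by
    rw [Matrix.conjTranspose_submatrix, Matrix.submatrix_mul_equiv, hV,
      Matrix.submatrix_one_equiv]
  have hdiag : (Matrix.diagonal (RCLike.ofReal ∘ hM.eigenvalues) : Matrix n n ℂ).submatrix e e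
      = Matrix.diagonal (fun j : m => ((hM.eigenvalues (e j) : ℝ) : ℂ)) := by
    ext i j
    by_cases h : i = j
    · subst h; simp
    · rw [Matrix.submatrix_apply, Matrix.diagonal_apply_ne _ (fun hc => h (e.injective hc)),
        Matrix.diagonal_apply_ne _ h]
  have hdecomp : M.submatrix e e = (V.submatrix e e) *
      Matrix.diagonal (fun j : m => ((hM.eigenvalues (e j) : ℝ) : ℂ)) * (V.submatrix e e)ᴴ := by
    rw [← hdiag, Matrix.conjTranspose_submatrix, Matrix.submatrix_mul_equiv,
      Matrix.submatrix_mul_equiv]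
    conv_lhs => rw [hM.spectral_theorem]
    rfl
  rw [vN_eq_sum hM', spec_sum hM' _ hV' _ hdecomp gfun, vN_eq_sum hM]
  exact e.sum_comp (fun i => gfun (hM.eigenvalues i))


lemma norm_sq_eq_mul_conj (z : ℂ) : ((‖z‖ : ℝ) ^ 2 : ℂ) = z * (starRingEnd ℂ) z := by
  rw [Complex.mul_conj, Complex.normSq_eq_norm_sq]
  norm_cast

lemma factor_lemma {dA dB dA' dB' : ℕ} (φ : Fin dA × Fin dB → ℂ)
    (hφ : ∑ x, ‖φ x‖ ^ 2 = 1)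
    (ψ : (Fin dA × Fin dA') × (Fin dB × Fin dB') → ℂ)
    (hψ : IsPurification (dA' := dA') (dB' := dB') (proj φ) ψ) :
    ∃ c : Fin dA' × Fin dB' → ℂ, (∑ k, ‖c k‖ ^ 2 = 1) ∧
      ∀ a b a2 b2, ψ ((a, a2), (b, b2)) = c (a2, b2) * φ (a, b) := by
  classical
  set v : Fin dA' × Fin dB' → Fin dA × Fin dB → ℂ :=
    fun k y => ψ ((y.1, k.1), (y.2, k.2)) with hv
  set c : Fin dA' × Fin dB' → ℂ :=
    fun k => ∑ y, (starRingEnd ℂ) (φ y) * v k y with hc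
  have hφ' : ∑ y, φ y * (starRingEnd ℂ) (φ y) = 1 := by
    rw [show (1 : ℂ) = ((1 : ℝ) : ℂ) from by norm_num, ← hφ]
    push_cast
    exact Finset.sum_congr rfl fun y _ => (norm_sq_eq_mul_conj (φ y)).symm
  have hρ : ∀ y z : Fin dA × Fin dB,
      φ y * (starRingEnd ℂ) (φ z) = ∑ k, v k y * (starRingEnd ℂ) (v k z) := by
    intro y z
    have h2 := hψ.2 y.1 y.2 z.1 z.2
    rw [show proj φ (y.1, y.2) (z.1, z.2) = φ y * (starRingEnd ℂ) (φ z) from rfl] at h2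
    rw [h2, Fintype.sum_prod_type]
  have hcconj : ∀ k, (starRingEnd ℂ) (c k) = ∑ y, φ y * (starRingEnd ℂ) (v k y) := by
    intro k
    rw [hc]
    simp only [map_sum, _root_.map_mul, Complex.conj_conj]
  have hS : ∑ k, ∑ y, v k y * (starRingEnd ℂ) (v k y) = 1 := by
    rw [Finset.sum_comm]
    rw [Finset.sum_congr rfl fun y _ => (hρ y y).symm]
    exact hφ'
  have hC2 : ∑ k, c k * (starRingEnd ℂ) (c k) = 1 := by
    have e : ∀ k, c k * (starRingEnd ℂ) (c k) =
        ∑ y, ∑ z, ((starRingEnd ℂ) (φ y) * φ z) * (v k y * (starRingEnd ℂ) (v k z)) := by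
      intro k
      rw [hcconj k, hc, Finset.sum_mul_sum]
      exact Finset.sum_congr rfl fun y _ => Finset.sum_congr rfl fun z _ => by ring
    rw [Finset.sum_congr rfl fun k _ => e k, Finset.sum_comm]
    rw [Finset.sum_congr rfl fun y _ => Finset.sum_comm]
    have e2 : ∀ y z, ∑ k, ((starRingEnd ℂ) (φ y) * φ z) * (v k y * (starRingEnd ℂ) (v k z))
        = ((starRingEnd ℂ) (φ y) * φ y) * (φ z * (starRingEnd ℂ) (φ z)) := by
      intro y z
      rw [← Finset.mul_sum, ← hρ y z]
      ring
    rw [Finset.sum_congr rfl fun y _ => Finset.sum_congr rfl fun z _ => e2 y z]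
    have : ∀ y : Fin dA × Fin dB, ∑ z : Fin dA × Fin dB,
        ((starRingEnd ℂ) (φ y) * φ y) * (φ z * (starRingEnd ℂ) (φ z))
        = (starRingEnd ℂ) (φ y) * φ y := by
      intro y
      rw [← Finset.mul_sum, hφ', mul_one]
    rw [Finset.sum_congr rfl fun y _ => this y]
    rw [Finset.sum_congr rfl fun y _ => mul_comm ((starRingEnd ℂ) (φ y)) (φ y)]
    exact hφ'
  have hperk : ∀ k, ∑ y, (v k y - c k * φ y) * (starRingEnd ℂ) (v k y - c k * φ y)
      = (∑ y, v k y * (starRingEnd ℂ) (v k y)) - c k * (starRingEnd ℂ) (c k) := by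
    intro k
    have expand : ∀ y, (v k y - c k * φ y) * (starRingEnd ℂ) (v k y - c k * φ y)
        = v k y * (starRingEnd ℂ) (v k y)
          - (starRingEnd ℂ) (c k) * ((starRingEnd ℂ) (φ y) * v k y)
          - c k * (φ y * (starRingEnd ℂ) (v k y))
          + (c k * (starRingEnd ℂ) (c k)) * (φ y * (starRingEnd ℂ) (φ y)) := by
      intro y
      simp only [map_sub, _root_.map_mul]
      ring
    rw [Finset.sum_congr rfl fun y _ => expand y]
    rw [Finset.sum_add_distrib, Finset.sum_sub_distrib, Finset.sum_sub_distrib,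
      ← Finset.mul_sum, ← Finset.mul_sum, ← Finset.mul_sum]
    rw [show (∑ y, (starRingEnd ℂ) (φ y) * v k y) = c k from rfl, ← hcconj k, hφ']
    ring
  have hT : ∑ k, ∑ y, Complex.normSq (v k y - c k * φ y) = 0 := by
    have hTC : ((∑ k, ∑ y, Complex.normSq (v k y - c k * φ y) : ℝ) : ℂ) = 0 := by
      push_cast
      rw [Finset.sum_congr rfl fun k _ => Finset.sum_congr rfl fun y _ =>
        (Complex.mul_conj (v k y - c k * φ y)).symm]
      rw [Finset.sum_congr rfl fun k _ => hperk k, Finset.sum_sub_distrib, hS, hC2, sub_self]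
    exact_mod_cast hTC
  have hzero : ∀ k y, v k y - c k * φ y = 0 := by
    intro k y
    have h1 : ∀ k ∈ Finset.univ, (0:ℝ) ≤ ∑ y, Complex.normSq (v k y - c k * φ y) :=
      fun k _ => Finset.sum_nonneg fun y _ => Complex.normSq_nonneg _
    have h2 := (Finset.sum_eq_zero_iff_of_nonneg h1).mp hT k (Finset.mem_univ k)
    have h3 := (Finset.sum_eq_zero_iff_of_nonneg
      (fun y _ => Complex.normSq_nonneg (v k y - c k * φ y))).mp h2 y (Finset.mem_univ y)
    exact Complex.normSq_eq_zero.mp h3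
  refine ⟨c, ?_, ?_⟩
  · have : ((∑ k, ‖c k‖ ^ 2 : ℝ) : ℂ) = ((1:ℝ) : ℂ) := by
      push_cast
      rw [Finset.sum_congr rfl fun k _ => norm_sq_eq_mul_conj (c k), hC2]
    exact_mod_cast this
  · intro a b a2 b2
    have := hzero (a2, b2) (a, b)
    have := sub_eq_zero.mp this
    exact this


/-- For a bipartite pure state, the entanglement of purification equals its
entanglement entropy, and the optimal purification is the pure state itself
(trivial ancillas). -/
theorem stmt0 {dA dB : ℕ} (φ : Fin dA × Fin dB → ℂ)
    (hφ : ∑ x, ‖φ x‖ ^ 2 = 1) :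
    Ep (proj φ) = ent φ ∧
    IsPurification (dA' := 1) (dB' := 1) (proj φ)
      (fun x => φ (x.1.1, x.2.1)) ∧
    ent (fun x : (Fin dA × Fin 1) × (Fin dB × Fin 1) => φ (x.1.1, x.2.1)) = ent φ := by
  classical
  set ψt : (Fin dA × Fin 1) × (Fin dB × Fin 1) → ℂ := fun x => φ (x.1.1, x.2.1) with hψt
  have hσ := density_ptraceL φ hφ
  have hpur : IsPurification (dA' := 1) (dB' := 1) (proj φ) ψt := by
    constructor
    · rw [show ∑ x : (Fin dA × Fin 1) × (Fin dB × Fin 1), ‖ψt x‖ ^ 2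
          = ∑ p : Fin dA × Fin 1, ∑ q : Fin dB × Fin 1, ‖φ (p.1, q.1)‖ ^ 2 from
        Fintype.sum_prod_type (f := fun x : (Fin dA × Fin 1) × (Fin dB × Fin 1) => ‖ψt x‖ ^ 2)]
      rw [show ∑ p : Fin dA × Fin 1, ∑ q : Fin dB × Fin 1, ‖φ (p.1, q.1)‖ ^ 2
          = ∑ a : Fin dA, ∑ q : Fin dB × Fin 1, ‖φ (a, q.1)‖ ^ 2 from by
        rw [Fintype.sum_prod_type]
        exact Finset.sum_congr rfl fun a _ => Fin.sum_univ_one _]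
      rw [show ∑ a : Fin dA, ∑ q : Fin dB × Fin 1, ‖φ (a, q.1)‖ ^ 2
          = ∑ a : Fin dA, ∑ b : Fin dB, ‖φ (a, b)‖ ^ 2 from by
        refine Finset.sum_congr rfl fun a _ => ?_
        rw [Fintype.sum_prod_type]
        exact Finset.sum_congr rfl fun b _ => Fin.sum_univ_one _]
      rw [← Fintype.sum_prod_type (f := fun x : Fin dA × Fin dB => ‖φ x‖ ^ 2)]
      exact hφ
    · intro a b a' b'
      simp only [Fin.sum_univ_one]
      rfl
  have hent3 : ent ψt = ent φ := by
    have heq : ptraceL (proj ψt) = (ptraceL (proj φ)).submatrix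
        (Equiv.prodUnique (Fin dB) (Fin 1)) (Equiv.prodUnique (Fin dB) (Fin 1)) := by
      ext i j
      show ∑ k : Fin dA × Fin 1, proj ψt (k, i) (k, j) = ptraceL (proj φ) i.1 j.1
      rw [Fintype.sum_prod_type]
      rw [Finset.sum_congr rfl fun a _ => Fin.sum_univ_one
        (fun a2 => proj ψt ((a, a2), i) ((a, a2), j))]
      rfl
    rw [ent, ent, heq, vN_submatrix _ _ hσ.1.1]
  refine ⟨?_, hpur, hent3⟩
  have hmem : ent φ ∈ { e : ℝ | ∃ (dA' dB' : ℕ)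
      (ψ : (Fin dA × Fin dA') × (Fin dB × Fin dB') → ℂ),
      IsPurification (proj φ) ψ ∧ e = ent ψ } := ⟨1, 1, ψt, hpur, hent3.symm⟩
  have hlb : ∀ e ∈ { e : ℝ | ∃ (dA' dB' : ℕ)
      (ψ : (Fin dA × Fin dA') × (Fin dB × Fin dB') → ℂ),
      IsPurification (proj φ) ψ ∧ e = ent ψ }, ent φ ≤ e := by
    rintro e ⟨dA', dB', ψ, hp, rfl⟩
    obtain ⟨c, hc1, hcf⟩ := factor_lemma φ hφ ψ hp
    have hτ := density_ptraceL c hc1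
    have heq : ptraceL (proj ψ) = (ptraceL (proj φ)) ⊗ₖ (ptraceL (proj c)) := by
      ext i j
      show ∑ k : Fin dA × Fin dA', ψ (k, i) * (starRingEnd ℂ) (ψ (k, j)) = _
      calc ∑ k : Fin dA × Fin dA', ψ (k, i) * (starRingEnd ℂ) (ψ (k, j))
          = ∑ k : Fin dA × Fin dA',
            (φ (k.1, i.1) * (starRingEnd ℂ) (φ (k.1, j.1))) *
            (c (k.2, i.2) * (starRingEnd ℂ) (c (k.2, j.2))) := by
            refine Finset.sum_congr rfl fun k _ => ?_
            rw [show ψ (k, i) = ψ ((k.1, k.2), (i.1, i.2)) from rfl,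
              show ψ (k, j) = ψ ((k.1, k.2), (j.1, j.2)) from rfl,
              hcf k.1 i.1 k.2 i.2, hcf k.1 j.1 k.2 j.2]
            simp only [_root_.map_mul]
            ring
        _ = (∑ a : Fin dA, φ (a, i.1) * (starRingEnd ℂ) (φ (a, j.1))) *
            (∑ a2 : Fin dA', c (a2, i.2) * (starRingEnd ℂ) (c (a2, j.2))) := by
            rw [Finset.sum_mul_sum]
            rw [Fintype.sum_prod_type]
        _ = _ := rfl
    have hent : ent ψ = vN (ptraceL (proj φ)) + vN (ptraceL (proj c)) := by
      rw [show ent ψ = vN (ptraceL (proj ψ)) from rfl, heq,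
        vN_kron hσ.1 hτ.1 hσ.2 hτ.2]
    rw [hent]
    have h0 := vN_nonneg hτ.1 hτ.2
    show vN (ptraceL (proj φ)) ≤ vN (ptraceL (proj φ)) + vN (ptraceL (proj c))
    linarith
  exact le_antisymm (csInf_le ⟨ent φ, hlb⟩ hmem) (le_csInf ⟨ent φ, hmem⟩ hlb)


end QIT
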